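/- In the category of posets, the regular epimorphism e : 2 ⊔ 2 → 3 (the coequalizer of the two maps 1 → 2 ⊔ 2 picking out 1 and 0′, which identifies 1 with 0′) does not satisfy the other pullback lemma: there is a commutative two-square diagram over e in which the left square and the outer square are pullbacks but the right square is not. -/

import Mathlib

open CategoryTheory

/-- `|2|`: the discrete poset on two elements. -/
def DBool : Type := Bool

instance : DecidableEq DBool := inferInstanceAs (DecidableEq Bool)
instance : Fintype DBool := inferInstanceAs (Fintype Bool)

instance : PartialOrder DBool where
  le a b := a = b
  le_refl _ := rfl
  le_trans _ _ _ h h' := Eq.trans h h'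
  le_antisymm _ _ h _ := h

instance : DecidableRel (α := DBool) (· ≤ ·) := fun a b =>
  inferInstanceAs (Decidable (a = b))

instance : DecidableRel (α := Bool ⊕ Bool) (· ≤ ·) := fun a b => by
  rcases a with a | a <;> rcases b with b | b
  · exact decidable_of_iff _ Sum.inl_le_inl_iff.symm
  · exact isFalse Sum.not_inl_le_inr
  · exact isFalse Sum.not_inr_le_inl
  · exact decidable_of_iff _ Sum.inr_le_inr_iff.symm

/-- The regular epimorphism `e : 2 ⊔ 2 → 3`, given by `0↦0, 1↦1, 0'↦1, 1'↦2`
(the coequalizer identifying `1` with `0'`). -/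
def e : PartOrd.of (Bool ⊕ Bool) ⟶ PartOrd.of (Fin 3) :=
  PartOrd.ofHom (OrderHom.mk
    (Sum.elim (fun b => if b then (1 : Fin 3) else 0) (fun b => if b then 2 else 1))
    (by decide) : (Bool ⊕ Bool) →o Fin 3)

/-- The top-right map `{0↦0, 1↦1} : |2| → 2`. -/
def t₂ : PartOrd.of DBool ⟶ PartOrd.of Bool :=
  PartOrd.ofHom (OrderHom.mk (fun b => (show Bool from b)) (by decide) : DBool →o Bool)

/-- The left vertical map `|2| → 2 ⊔ 2`, `0 ↦ 0, 1 ↦ 1'`. -/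
def vA : PartOrd.of DBool ⟶ PartOrd.of (Bool ⊕ Bool) :=
  PartOrd.ofHom (OrderHom.mk (fun b => if (show Bool from b) then Sum.inr true else Sum.inl false)
    (by decide) : DBool →o Bool ⊕ Bool)

/-- The middle vertical map `{0↦0, 1↦2} : |2| → 3`. -/
def vB : PartOrd.of DBool ⟶ PartOrd.of (Fin 3) :=
  PartOrd.ofHom (OrderHom.mk (fun b => if (show Bool from b) then (2 : Fin 3) else 0)
    (by decide) : DBool →o Fin 3)

/-- The right vertical map `{0↦0, 1↦2} : 2 → 3`. -/
def vC : PartOrd.of Bool ⟶ PartOrd.of (Fin 3) :=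
  PartOrd.ofHom (OrderHom.mk (fun b => if b then (2 : Fin 3) else 0) (by decide) : Bool →o Fin 3)


open Limits

/-- Extensionality for `PartOrd` morphisms. -/
lemma PartOrd.hom_ext' {X Y : PartOrd} (f g : X ⟶ Y)
    (h : ∀ x, f.hom x = g.hom x) : f = g :=
  PartOrd.hom_ext (OrderHom.ext _ _ (funext h))

def eFun : Bool ⊕ Bool → Fin 3 := fun x => e.hom x
def vAFun : DBool → Bool ⊕ Bool := fun x => vA.hom x
def vBFun : DBool → Fin 3 := fun x => vB.hom x
def vCFun : Bool → Fin 3 := fun x => vC.hom x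
def t₂Fun : DBool → Bool := fun x => t₂.hom x

lemma keyLeftComm : ∀ x : DBool, vBFun x = eFun (vAFun x) := by decide

lemma keyB : ∀ (a : DBool) (c : Bool ⊕ Bool), vBFun a = eFun c → vAFun a = c := by decide

lemma keyOuterComm : ∀ (a : DBool), vCFun (t₂Fun a) = eFun (vAFun a) := by decide

lemma keyLe : ∀ c c' : Bool ⊕ Bool, c ≤ c' →
    (∃ a : Bool, vCFun a = eFun c) → (∃ a : Bool, vCFun a = eFun c') → c = c' := by decide

lemma keyCinj : ∀ a b : Bool, vCFun a = vCFun b → (show DBool from a) ≤ (show DBool from b) := by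
  decide

lemma keyC : ∀ (a : Bool) (c : Bool ⊕ Bool), vCFun a = eFun c →
    vAFun (show DBool from a) = c := by decide

lemma keyT : ∀ (d : DBool) (a : Bool), t₂Fun d = a → d = (show DBool from a) := by decide

lemma keySurj : ∀ i : Fin 3, ∃ x : Bool ⊕ Bool, eFun x = i := by decide

/-- The descent map for the coequalizer. -/
def descHom {X : Type u} [PartialOrder X] (π : (Bool ⊕ Bool) →o X)
    (hcond : π (Sum.inl true) = π (Sum.inr false)) : Fin 3 →o X where
  toFun i := if i.val = 0 then π (Sum.inl false) else
    if i.val = 1 then π (Sum.inl true) else π (Sum.inr true)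
  monotone' := by
    have h01 : π (Sum.inl false) ≤ π (Sum.inl true) :=
      π.monotone (by simp [Sum.inl_le_inl_iff])
    have h12 : π (Sum.inl true) ≤ π (Sum.inr true) := by
      rw [hcond]; exact π.monotone (by simp [Sum.inr_le_inr_iff])
    intro i j hij
    have hij' : i.val ≤ j.val := hij
    fin_cases i <;> fin_cases j <;> simp_all <;>
      first
        | exact h01
        | exact h12
        | exact h01.trans h12

lemma descHom_e {X : Type u} [PartialOrder X] (π : (Bool ⊕ Bool) →o X)
    (hcond : π (Sum.inl true) = π (Sum.inr false)) :
    ∀ x, descHom π hcond (eFun x) = π x := by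
  rintro ((_ | _) | (_ | _)) <;> first | rfl | exact hcond

lemma descHom_uniq {X : Type u} [PartialOrder X] (π : (Bool ⊕ Bool) →o X)
    (hcond : π (Sum.inl true) = π (Sum.inr false)) (m : Fin 3 →o X)
    (hm : ∀ x, m (eFun x) = π x) : ∀ i, m i = descHom π hcond i := by
  intro i
  obtain ⟨x, hx⟩ := keySurj i
  rw [← hx, hm x, descHom_e π hcond x]


/-- **Counterexample to the other pullback lemma in `Pos`.** The map
`e : 2 ⊔ 2 → 3` is a regular epimorphism, yet in the commutative diagram with
top row `|2| --id--> |2| --{0↦0,1↦1}--> 2`, bottom row `2⊔2 --e--> 3 --id--> 3`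
and verticals `{0↦0,1↦1'}`, `{0↦0,1↦2}`, `{0↦0,1↦2}`, the left square and the
outer square are pullbacks, but the right square is not a pullback: `e` does
not satisfy the other pullback lemma. -/
theorem pos_counterexample_to_other_pullback_lemma :
    Nonempty (RegularEpi e) ∧
    IsPullback (𝟙 (PartOrd.of DBool)) vA vB e ∧
    IsPullback (𝟙 (PartOrd.of DBool) ≫ t₂) vA vC (e ≫ 𝟙 (PartOrd.of (Fin 3))) ∧
    ¬ IsPullback t₂ vB vC (𝟙 (PartOrd.of (Fin 3))) := by
  constructor
  · -- `e` is a regular epi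
    refine ⟨{ W := PartOrd.of PUnit
              left := PartOrd.ofHom (OrderHom.mk (fun _ => Sum.inl true) (fun _ _ _ => le_rfl) :
                PUnit →o (Bool ⊕ Bool))
              right := PartOrd.ofHom (OrderHom.mk (fun _ => Sum.inr false) (fun _ _ _ => le_rfl) :
                PUnit →o (Bool ⊕ Bool))
              w := PartOrd.hom_ext' _ _ (fun _ => rfl)
              isColimit := ?_ }⟩
    have hcond : ∀ s : Cofork
        (show PartOrd.of PUnit ⟶ PartOrd.of (Bool ⊕ Bool) from
          PartOrd.ofHom (OrderHom.mk (fun _ => Sum.inl true) (fun _ _ _ => le_rfl)))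
        (show PartOrd.of PUnit ⟶ PartOrd.of (Bool ⊕ Bool) from
          PartOrd.ofHom (OrderHom.mk (fun _ => Sum.inr false) (fun _ _ _ => le_rfl))),
        s.π.hom (Sum.inl true)
          = s.π.hom (Sum.inr false) := fun s =>
      congrArg (fun (f : PartOrd.of PUnit ⟶ s.pt) =>
        f.hom PUnit.unit) s.condition
    refine Cofork.IsColimit.mk _
      (fun s => (PartOrd.ofHom (descHom s.π.hom (hcond s)) :
        PartOrd.of (Fin 3) ⟶ s.pt))
      (fun s => PartOrd.hom_ext' _ _ (fun x => descHom_e _ (hcond s) x))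
      (fun s m hm => PartOrd.hom_ext' _ _ (fun i =>
        descHom_uniq _ (hcond s) m.hom
          (fun x => congrArg (fun (f : PartOrd.of (Bool ⊕ Bool) ⟶ s.pt) =>
            f.hom x) hm) i))
  refine ⟨?_, ?_, ?_⟩
  · -- left square is a pullback
    have comm : 𝟙 (PartOrd.of DBool) ≫ vB = vA ≫ e :=
      PartOrd.hom_ext' _ _ (fun x => keyLeftComm x)
    refine IsPullback.of_isLimit (c := PullbackCone.mk _ _ comm)
      (PullbackCone.IsLimit.mk comm (fun s => s.fst) (fun s => Category.comp_id _)
        (fun s => ?_) (fun s m hm₁ _ => by simpa using hm₁))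
    refine PartOrd.hom_ext' _ _ (fun x => ?_)
    have hc := congrArg (fun (f : s.pt ⟶ PartOrd.of (Fin 3)) =>
        f.hom x) s.condition
    exact keyB _ _ hc
  · -- outer square is a pullback
    have comm : (𝟙 (PartOrd.of DBool) ≫ t₂) ≫ vC = vA ≫ (e ≫ 𝟙 (PartOrd.of (Fin 3))) :=
      PartOrd.hom_ext' _ _ (fun x => keyOuterComm x)
    refine IsPullback.of_isLimit (c := PullbackCone.mk _ _ comm)
      (PullbackCone.IsLimit.mk comm (fun s => ?_) (fun s => ?_) (fun s => ?_)
        (fun s m hm₁ _ => ?_))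
    · -- the lift
      refine (show (s.pt →o DBool) →
          ((s.pt : PartOrd) ⟶ (PullbackCone.mk _ _ comm).pt) from PartOrd.ofHom) ?_
      have hc : ∀ x, vCFun (s.fst.hom x)
          = eFun (s.snd.hom x) := fun x =>
        congrArg (fun (f : s.pt ⟶ PartOrd.of (Fin 3)) =>
          f.hom x) s.condition
      refine OrderHom.mk (fun x => (show Bool from s.fst.hom x : DBool)) ?_
      intro x y hxy
      have hsnd : s.snd.hom x
          ≤ s.snd.hom y :=
        s.snd.hom.monotone hxy
      have hcc := keyLe _ _ hsnd ⟨_, hc x⟩ ⟨_, hc y⟩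
      exact keyCinj _ _ (by rw [hc x, hc y, hcc])
    · exact PartOrd.hom_ext' _ _ (fun x => rfl)
    · refine PartOrd.hom_ext' _ _ (fun x => ?_)
      have hc := congrArg (fun (f : s.pt ⟶ PartOrd.of (Fin 3)) =>
          f.hom x) s.condition
      exact keyC _ _ hc
    · refine PartOrd.hom_ext' _ _ (fun x => ?_)
      have h := congrArg (fun (f : s.pt ⟶ PartOrd.of Bool) =>
        f.hom x) hm₁
      exact keyT _ _ h
  · -- right square is not a pullback
    intro hp
    have comm : (𝟙 (PartOrd.of Bool)) ≫ vC = vC ≫ 𝟙 (PartOrd.of (Fin 3)) := by simp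
    have hfst : hp.lift (𝟙 (PartOrd.of Bool)) vC comm ≫ t₂ = 𝟙 (PartOrd.of Bool) :=
      hp.lift_fst (𝟙 (PartOrd.of Bool)) vC comm
    set l : Bool →o DBool := (hp.lift (𝟙 (PartOrd.of Bool)) vC comm).hom with hl
    have hfst' : ∀ b : Bool, t₂Fun (l b) = b :=
      fun b => congrArg (fun (f : PartOrd.of Bool ⟶ PartOrd.of Bool) =>
        f.hom b) hfst
    have heq : l false = l true := l.monotone (by decide)
    have hne : (false : Bool) = true := by
      rw [← hfst' false, ← hfst' true, heq]
    exact Bool.noConfusion hne
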